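/- arXiv:1006.4621 — 4 statements merged into one kernel-verified Lean document; each statement's English description precedes it below -/
import Mathlib

section
/- (Hennessy–Milner-type theorem for EL) On finite relational models, EL-similarity coincides with EL-simulation: if M₁ and M₂ are finite, then u is EL-similar to v if and only if there exists an EL-simulation Z between M₁ and M₂ with u Z v. -/
inductive EL (P R : Type) : Type
  | top : EL P R
  | atom : P → EL P R
  | and : EL P R → EL P R → EL P R
  | ex : R → EL P R → EL P R

/-- Semantics of EL over a relational model given by `up` (unary relations)
and `br` (binary relations). -/
def elSat {P R W : Type} (up : P → Set W) (br : R → Set (W × W)) : EL P R → Set W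
  | .top => Set.univ
  | .atom p => up p
  | .and a b => elSat up br a ∩ elSat up br b
  | .ex r a => {u | ∃ v, (u, v) ∈ br r ∧ v ∈ elSat up br a}

/-- `Z` is an EL-simulation: it satisfies (atom_L) and (zig). -/
def IsELSim {P R W₁ W₂ : Type} (up₁ : P → Set W₁) (br₁ : R → Set (W₁ × W₁))
    (up₂ : P → Set W₂) (br₂ : R → Set (W₂ × W₂)) (Z : Set (W₁ × W₂)) : Prop :=
  (∀ u v p, (u, v) ∈ Z → u ∈ up₁ p → v ∈ up₂ p) ∧
  (∀ u v u' r, (u, v) ∈ Z → (u, u') ∈ br₁ r →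
    ∃ v', (v, v') ∈ br₂ r ∧ (u', v') ∈ Z)

private lemma listConj {P R W₁ W₂ : Type} (up₁ : P → Set W₁) (br₁ : R → Set (W₁ × W₁))
    (up₂ : P → Set W₂) (br₂ : R → Set (W₂ × W₂)) (u' : W₁) (Q : W₂ → Prop)
    (L : List W₂)
    (h : ∀ w ∈ L, Q w → ∃ γ : EL P R, u' ∈ elSat up₁ br₁ γ ∧ w ∉ elSat up₂ br₂ γ) :
    ∃ γ : EL P R, u' ∈ elSat up₁ br₁ γ ∧ ∀ w ∈ L, Q w → w ∉ elSat up₂ br₂ γ := by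
  induction L with
  | nil => exact ⟨.top, trivial, by simp⟩
  | cons a L ih =>
    obtain ⟨γ, hγ, hL⟩ := ih (fun w hw => h w (List.mem_cons_of_mem _ hw))
    by_cases hQ : Q a
    · obtain ⟨δ, hδ, ha⟩ := h a List.mem_cons_self hQ
      refine ⟨.and γ δ, ⟨hγ, hδ⟩, ?_⟩
      intro w hw hQw hsat
      rcases List.mem_cons.mp hw with rfl | hw
      · exact ha hsat.2
      · exact hL w hw hQw hsat.1
    · refine ⟨γ, hγ, ?_⟩
      intro w hw hQw
      rcases List.mem_cons.mp hw with rfl | hw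
      · exact absurd hQw hQ
      · exact hL w hw hQw

/-- Hennessy–Milner-type theorem for EL: on finite models, EL-similarity
coincides with the existence of an EL-simulation. -/
theorem elSimilar_iff_elSim_of_finite {P R W₁ W₂ : Type} [Fintype W₁] [Fintype W₂]
    (up₁ : P → Set W₁) (br₁ : R → Set (W₁ × W₁))
    (up₂ : P → Set W₂) (br₂ : R → Set (W₂ × W₂)) (u : W₁) (v : W₂) :
    (∀ γ : EL P R, u ∈ elSat up₁ br₁ γ → v ∈ elSat up₂ br₂ γ) ↔
      ∃ Z : Set (W₁ × W₂), IsELSim up₁ br₁ up₂ br₂ Z ∧ (u, v) ∈ Z := by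
  constructor
  · intro hsim
    refine ⟨{p | ∀ γ : EL P R, p.1 ∈ elSat up₁ br₁ γ → p.2 ∈ elSat up₂ br₂ γ},
      ⟨?_, ?_⟩, hsim⟩
    · intro a b p hZ hp
      exact hZ (.atom p) hp
    · intro a b a' r hZ hr
      by_contra hno
      push_neg at hno
      obtain ⟨γ, hγ, hall⟩ := listConj up₁ br₁ up₂ br₂ a'
        (fun w => (b, w) ∈ br₂ r) Finset.univ.toList
        (fun w _ hw => by
          obtain ⟨δ, hδ⟩ := not_forall.mp (hno w hw)
          push_neg at hδ
          exact ⟨δ, hδ⟩)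
      have : b ∈ elSat up₂ br₂ (.ex r γ) := hZ (.ex r γ) ⟨a', hr, hγ⟩
      obtain ⟨w, hw, hwγ⟩ := this
      exact hall w (Finset.mem_toList.mpr (Finset.mem_univ w)) hw hwγ
  · rintro ⟨Z, ⟨hatom, hzig⟩, huv⟩
    intro γ
    induction γ generalizing u v with
    | top => intro _; trivial
    | atom p => exact hatom u v p huv
    | and a b iha ihb => exact fun h => ⟨iha u v huv h.1, ihb u v huv h.2⟩
    | ex r a ih =>
      rintro ⟨u', hr, hu'⟩
      obtain ⟨v', hv', hZ'⟩ := hzig u v u' r huv hr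
      exact ⟨v', hv', ih u' v' hZ' hu'⟩
end

section
/- (Quotient model preserves formulas) Let M = (Δ, I) be a relational model and let ≡ be the equivalence relation 'u ≡ v iff u ≼_L v and v ≼_L u' for L = ALC (mutual ALC-similarity), on a finite model M. Define the quotient model M_L with domain the set of equivalence classes [u], and ([u₁],[u₂]) ∈ I_L(r) iff (u₁,u₂) ∈ I(r) for some representatives, and [u] ∈ I_L(p) iff u ∈ I(p). Then for every ALC formula γ and every u ∈ Δ: u ∈ [[γ]]_M if and only if [u] ∈ [[γ]]_{M_L}. -/
inductive ALC (P R : Type) : Type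
  | top : ALC P R
  | atom : P → ALC P R
  | not : ALC P R → ALC P R
  | and : ALC P R → ALC P R → ALC P R
  | ex : R → ALC P R → ALC P R

/-- Semantics of ALC over a relational model. -/
def alcSat {P R W : Type} (up : P → Set W) (br : R → Set (W × W)) : ALC P R → Set W
  | .top => Set.univ
  | .atom p => up p
  | .not a => (alcSat up br a)ᶜ
  | .and a b => alcSat up br a ∩ alcSat up br b
  | .ex r a => {u | ∃ v, (u, v) ∈ br r ∧ v ∈ alcSat up br a}

/-- Quotienting a finite model by mutual ALC-similarity preserves all ALC formulas. -/
theorem quotient_preserves_alc {P R W : Type} [Fintype W]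
    (up : P → Set W) (br : R → Set (W × W)) (s : Setoid W)
    (hs : ∀ u v : W, s.r u v ↔
      ((∀ γ : ALC P R, u ∈ alcSat up br γ → v ∈ alcSat up br γ) ∧
       (∀ γ : ALC P R, v ∈ alcSat up br γ → u ∈ alcSat up br γ))) :
    ∀ (γ : ALC P R) (u : W),
      u ∈ alcSat up br γ ↔
        Quotient.mk s u ∈ alcSat
          (fun p => {q : Quotient s | ∃ w, Quotient.mk s w = q ∧ w ∈ up p})
          (fun r => {qq : Quotient s × Quotient s |
            ∃ w₁ w₂, Quotient.mk s w₁ = qq.1 ∧ Quotient.mk s w₂ = qq.2 ∧ (w₁, w₂) ∈ br r})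
          γ := by
  intro γ
  induction γ with
  | top => intro u; simp [alcSat]
  | atom p =>
    intro u
    constructor
    · intro h; exact ⟨u, rfl, h⟩
    · rintro ⟨w, hw, hwp⟩
      have : s.r w u := Quotient.exact hw
      exact ((hs w u).mp this).1 (.atom p) hwp
  | not a ih =>
    intro u
    simp only [alcSat, Set.mem_compl_iff]
    exact not_congr (ih u)
  | and a b iha ihb =>
    intro u
    simp only [alcSat, Set.mem_inter_iff]
    exact and_congr (iha u) (ihb u)
  | ex r a ih =>
    intro u
    constructor
    · rintro ⟨v, hr, hv⟩
      exact ⟨Quotient.mk s v, ⟨u, v, rfl, rfl, hr⟩, (ih v).mp hv⟩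
    · rintro ⟨q, ⟨w₁, w₂, h1, h2, hr⟩, hq⟩
      have hw₂ : w₂ ∈ alcSat up br a := (ih w₂).mpr (h2 ▸ hq)
      have hw₁ : w₁ ∈ alcSat up br (.ex r a) := ⟨w₂, hr, hw₂⟩
      have : s.r w₁ u := Quotient.exact h1
      exact ((hs w₁ u).mp this).1 (.ex r a) hw₁
end

section
/- (Exact description of an element of a finite tree) Let M = (Δ, I) be a finite relational model whose binary relations form a tree rooted at v (every element is reachable from v by a unique path). Define recursively φ(u) = (⋀_{u ∈ I(p)} p) ∧ ⋀_{(u,u') ∈ I(r)} ∃r.φ(u'). Then v ∈ [[φ(v)]]_M. Moreover, for any relational model N and element w, w ∈ [[φ(v)]]_N if and only if there exists an EL-simulation Z from M to N with v Z w. -/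
/-- Conjunction of a finite list of EL formulas (`⊤` for the empty list). -/
def conjList {P R : Type} : List (EL P R) → EL P R
  | [] => .top
  | a :: l => .and a (conjList l)

/-- `validPath br w l`: the list of steps `l` is an actual path in the model starting at `w`. -/
def validPath {R W : Type} (br : R → Set (W × W)) : W → List (R × W) → Prop
  | _, [] => True
  | w, (r, u) :: l => (w, u) ∈ br r ∧ validPath br u l

/-- The last element of a path starting at `w`. -/
def pathLast {R W : Type} : W → List (R × W) → W
  | w, [] => w
  | _, (_, u) :: l => pathLast u l

lemma elSat_conjList {P R W : Type} (up : P → Set W) (br : R → Set (W × W))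
    (L : List (EL P R)) (w : W) :
    w ∈ elSat up br (conjList L) ↔ ∀ a ∈ L, w ∈ elSat up br a := by
  induction L with
  | nil => simp [conjList, elSat]
  | cons a l ih => simp [conjList, elSat, ih]

lemma pathLast_append {R W : Type} (w : W) (l1 l2 : List (R × W)) :
    pathLast w (l1 ++ l2) = pathLast (pathLast w l1) l2 := by
  induction l1 generalizing w with
  | nil => rfl
  | cons a l ih => cases a; simp [pathLast, ih]

lemma validPath_append {R W : Type} (br : R → Set (W × W)) (w : W) (l1 l2 : List (R × W)) :
    validPath br w (l1 ++ l2) ↔ validPath br w l1 ∧ validPath br (pathLast w l1) l2 := by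
  induction l1 generalizing w with
  | nil => simp [validPath, pathLast]
  | cons a l ih => cases a; simp [validPath, pathLast, ih, and_assoc]

/-- Exact description of the root of a finite tree-shaped model: the recursively defined
formula `φ v` is true at `v`, and in any model `N` it is true at `w` iff there is an
EL-simulation from `M` to `N` relating `v` to `w`. -/
theorem tree_exact_description {P R W : Type} [Fintype P] [Fintype R] [Fintype W]
    [DecidableEq W] [DecidableEq R]
    (up : P → Finset W) (br : R → Finset (W × W)) (v : W)
    (htree : ∀ u : W, ∃! l : List (R × W),
      validPath (fun r => (↑(br r) : Set (W × W))) v l ∧ pathLast v l = u)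
    (φ : W → EL P R)
    (hφ : ∀ u : W, φ u = .and
      (conjList ((Finset.univ : Finset P).toList.filterMap fun p =>
        if u ∈ up p then some (.atom p) else none))
      (conjList ((Finset.univ : Finset R).toList.flatMap fun r =>
        (Finset.univ : Finset W).toList.filterMap fun u' =>
          if (u, u') ∈ br r then some (.ex r (φ u')) else none))) :
    v ∈ elSat (fun p => (↑(up p) : Set W)) (fun r => (↑(br r) : Set (W × W))) (φ v) ∧
    ∀ (W' : Type) (up' : P → Set W') (br' : R → Set (W' × W')) (w : W'),
      w ∈ elSat up' br' (φ v) ↔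
        ∃ Z : Set (W × W'),
          IsELSim (fun p => (↑(up p) : Set W)) (fun r => (↑(br r) : Set (W × W)))
            up' br' Z ∧ (v, w) ∈ Z := by
  classical
  -- the unique path to each node and its basic properties
  let L : W → List (R × W) := fun u => (htree u).choose
  have hLspec : ∀ u, validPath (fun r => (↑(br r) : Set (W × W))) v (L u) ∧
      pathLast v (L u) = u := fun u => (htree u).choose_spec.1
  have hLuniq : ∀ u l, validPath (fun r => (↑(br r) : Set (W × W))) v l →
      pathLast v l = u → l = L u := fun u l h1 h2 => (htree u).choose_spec.2 l ⟨h1, h2⟩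
  have hedge : ∀ u u' r, (u, u') ∈ br r → L u' = L u ++ [(r, u')] := by
    intro u u' r h
    refine (hLuniq u' _ ?_ ?_).symm
    · rw [validPath_append]
      refine ⟨(hLspec u).1, ?_⟩
      rw [(hLspec u).2]
      exact ⟨Finset.mem_coe.mpr h, trivial⟩
    · rw [pathLast_append, (hLspec u).2]; rfl
  -- depth bound
  have hdepth : ∀ u, (L u).length < Fintype.card W := by
    intro u
    have hval : ∀ k : ℕ, validPath (fun r => (↑(br r) : Set (W × W))) v ((L u).take k) := by
      intro k
      have h := (hLspec u).1
      rw [← List.take_append_drop k (L u), validPath_append] at h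
      exact h.1
    have hinj : Function.Injective
        (fun k : Fin ((L u).length + 1) => pathLast v ((L u).take k)) := by
      intro k k' h
      simp only at h
      have e1 := hLuniq (pathLast v ((L u).take (k : ℕ))) _ (hval k) rfl
      have e2 := hLuniq (pathLast v ((L u).take (k : ℕ))) _ (hval k') h.symm
      have e3 : ((L u).take (k : ℕ)).length = ((L u).take (k' : ℕ)).length := by
        rw [e1.trans e2.symm]
      rw [List.length_take, List.length_take] at e3
      have hk := k.isLt
      have hk' := k'.isLt
      exact Fin.ext (by omega)
    have := Fintype.card_le_of_injective _ hinj
    simpa using this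
  -- membership in the two conjunct lists
  have hAmem : ∀ (u : W) (a : EL P R),
      a ∈ ((Finset.univ : Finset P).toList.filterMap fun p =>
        if u ∈ up p then some (EL.atom p) else none) ↔
      ∃ p, u ∈ up p ∧ a = EL.atom p := by
    intro u a
    simp only [List.mem_filterMap, Finset.mem_toList, Finset.mem_univ, true_and]
    constructor
    · rintro ⟨p, hp⟩
      by_cases h : u ∈ up p
      · rw [if_pos h, Option.some_inj] at hp
        exact ⟨p, h, hp.symm⟩
      · rw [if_neg h] at hp; cases hp
    · rintro ⟨p, h, rfl⟩
      exact ⟨p, by rw [if_pos h]⟩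
  have hBmem : ∀ (u : W) (a : EL P R),
      a ∈ ((Finset.univ : Finset R).toList.flatMap fun r =>
        (Finset.univ : Finset W).toList.filterMap fun u' =>
          if (u, u') ∈ br r then some (EL.ex r (φ u')) else none) ↔
      ∃ r u', (u, u') ∈ br r ∧ a = EL.ex r (φ u') := by
    intro u a
    simp only [List.mem_flatMap, List.mem_filterMap, Finset.mem_toList, Finset.mem_univ,
      true_and]
    constructor
    · rintro ⟨r, u', hp⟩
      by_cases h : (u, u') ∈ br r
      · rw [if_pos h, Option.some_inj] at hp
        exact ⟨r, u', h, hp.symm⟩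
      · rw [if_neg h] at hp; cases hp
    · rintro ⟨r, u', h, rfl⟩
      exact ⟨r, u', by rw [if_pos h]⟩
  -- the key lemma: any simulation pair satisfies the formula
  have key : ∀ (W' : Type) (up' : P → Set W') (br' : R → Set (W' × W')) (Z : Set (W × W')),
      IsELSim (fun p => (↑(up p) : Set W)) (fun r => (↑(br r) : Set (W × W))) up' br' Z →
      ∀ u w', (u, w') ∈ Z → w' ∈ elSat up' br' (φ u) := by
    intro W' up' br' Z hZ
    have main : ∀ n u w', Fintype.card W - (L u).length ≤ n → (u, w') ∈ Z →
        w' ∈ elSat up' br' (φ u) := by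
      intro n
      induction n with
      | zero =>
        intro u w' hn _
        exact absurd hn (by have := hdepth u; omega)
      | succ n ih =>
        intro u w' hn hZu
        rw [hφ u]
        refine ⟨?_, ?_⟩
        · rw [elSat_conjList]
          intro a ha
          obtain ⟨p, hp, rfl⟩ := (hAmem u a).1 ha
          exact hZ.1 u w' p hZu (Finset.mem_coe.mpr hp)
        · rw [elSat_conjList]
          intro a ha
          obtain ⟨r, u', hr, rfl⟩ := (hBmem u a).1 ha
          obtain ⟨w'', hw1, hw2⟩ := hZ.2 u w' u' r hZu (Finset.mem_coe.mpr hr)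
          refine ⟨w'', hw1, ?_⟩
          apply ih u' w'' ?_ hw2
          have he := hedge u u' r hr
          have hd := hdepth u
          rw [he, List.length_append]
          simp only [List.length_cons, List.length_nil]
          omega
    intro u w' h
    exact main (Fintype.card W) u w' (by omega) h
  constructor
  · -- part 1: via the diagonal simulation
    refine key W (fun p => (↑(up p) : Set W)) (fun r => (↑(br r) : Set (W × W)))
      {q | q.1 = q.2} ⟨?_, ?_⟩ v v rfl
    · intro u w p h hu
      have : u = w := h
      rwa [← this]
    · intro u w u' r h hr
      have : u = w := h
      exact ⟨u', by rwa [← this], rfl⟩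
  · intro W' up' br' w
    constructor
    · intro hw
      refine ⟨{q | q.2 ∈ elSat up' br' (φ q.1)}, ⟨?_, ?_⟩, hw⟩
      · intro u w' p hmem hup
        have hmem' : w' ∈ elSat up' br' (φ u) := hmem
        rw [hφ u] at hmem'
        exact (elSat_conjList _ _ _ _).1 hmem'.1 (EL.atom p)
          ((hAmem u _).2 ⟨p, Finset.mem_coe.mp hup, rfl⟩)
      · intro u w' u' r hmem hr
        have hmem' : w' ∈ elSat up' br' (φ u) := hmem
        rw [hφ u] at hmem'
        obtain ⟨w'', h1, h2⟩ := (elSat_conjList _ _ _ _).1 hmem'.2 (EL.ex r (φ u'))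
          ((hBmem u _).2 ⟨r, u', Finset.mem_coe.mp hr, rfl⟩)
        exact ⟨w'', h1, h2⟩
    · rintro ⟨Z, hZ, hvw⟩
      exact key W' up' br' Z hZ v w hvw
end

section
/- (Invariant preservation in the refinement step) Let M = (Δ, I) be a relational model and suppose S : Δ → Set Δ and F : Δ → EL-formulas satisfy, for all u,v ∈ Δ: v ∈ [[F(v)]] and [[F(u)]] ⊆ S(u). Suppose u, v, w ∈ Δ and a binary relation r are such that (u,v) ∈ I(r), w ∈ S(u), and there is no w' with (w,w') ∈ I(r) and w' ∈ S(v). Then the updated formula F'(u) = F(u) ∧ ∃r.F(v) satisfies: u ∈ [[F'(u)]] and [[F'(u)]] ⊆ S(u) \ {w}. -/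
/-- Preservation of the loop invariant in the refinement step: if the invariant holds,
`(u,v) ∈ r`, `w ∈ S(u)`, and no `r`-successor of `w` lies in `S(v)`, then the updated
formula `F(u) ∧ ∃r.F(v)` is true at `u` and its extension is contained in `S(u) \ {w}`. -/
theorem refinement_step_invariant {P R W : Type}
    (up : P → Set W) (br : R → Set (W × W))
    (S : W → Set W) (F : W → EL P R)
    (hF : ∀ x : W, x ∈ elSat up br (F x))
    (hFS : ∀ x : W, elSat up br (F x) ⊆ S x)
    (u v w : W) (r : R)
    (huv : (u, v) ∈ br r) (hw : w ∈ S u)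
    (hno : ¬∃ w', (w, w') ∈ br r ∧ w' ∈ S v) :
    u ∈ elSat up br (.and (F u) (.ex r (F v))) ∧
    elSat up br (.and (F u) (.ex r (F v))) ⊆ S u \ {w} := by
  constructor
  · exact ⟨hF u, v, huv, hF v⟩
  · rintro x ⟨hx1, w', hxw', hw'⟩
    refine ⟨hFS u hx1, fun hxw => hno ?_⟩
    subst hxw
    exact ⟨w', hxw', hFS v hw'⟩
end
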